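/- Let R ⊆ S be an inclusion of commutative rings with a common element π such that: (1) the inclusion R → S is flat, (2) π lies in the Jacobson radical of both R and S, and (3) the induced map R/πR → S/πS is an isomorphism. Then R → S is faithfully flat. -/
import Mathlib

/-- Let `R ⊆ S` be commutative rings (an injective algebra map) with a common
element `π` such that the inclusion is flat, `π` lies in the Jacobson radical of both `R` and
`S`, and the induced map `R/πR → S/πS` is an isomorphism.  Then `R → S` is faithfully flat. -/
theorem statement_7 {R S : Type*} [CommRing R] [CommRing S] [Algebra R S]
    (hinj : Function.Injective (algebraMap R S)) (π : R)
    (hflat : Module.Flat R S)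
    (hJR : π ∈ Ideal.jacobson (⊥ : Ideal R))
    (hJS : algebraMap R S π ∈ Ideal.jacobson (⊥ : Ideal S))
    (hbij : Function.Bijective
      (show R ⧸ Ideal.span {π} →+* S ⧸ Ideal.span {algebraMap R S π} from
        Ideal.quotientMap (Ideal.span {algebraMap R S π}) (algebraMap R S)
          (by rw [Ideal.span_le, Set.singleton_subset_iff]
              exact Ideal.mem_comap.mpr (Ideal.subset_span rfl)))) :
    Module.FaithfullyFlat R S := by
  constructor
  intro m hm hsmul
  have hπm : π ∈ m := Ideal.mem_sInf.mp hJR ⟨bot_le, hm⟩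
  rw [Ideal.smul_top_eq_map] at hsmul
  have hmap : Ideal.map (algebraMap R S) m = ⊤ := by
    rw [← top_le_iff]
    intro x _
    exact (show x ∈ (Ideal.map (algebraMap R S) m).restrictScalars R from hsmul ▸ trivial)
  set e : R ⧸ Ideal.span {π} →+* S ⧸ Ideal.span {algebraMap R S π} :=
    Ideal.quotientMap (Ideal.span {algebraMap R S π}) (algebraMap R S)
      (by rw [Ideal.span_le, Set.singleton_subset_iff]
          exact Ideal.mem_comap.mpr (Ideal.subset_span rfl)) with he
  set q := Ideal.Quotient.mk (Ideal.span {algebraMap R S π}) with hq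
  set p := Ideal.Quotient.mk (Ideal.span {π}) with hp
  have h2 : Ideal.map (q.comp (algebraMap R S)) m = ⊤ := by
    rw [← Ideal.map_map, hmap, Ideal.map_top]
  have hcomm : q.comp (algebraMap R S) = e.comp p := (Ideal.quotientMap_comp_mk _).symm
  rw [hcomm, ← Ideal.map_map] at h2
  -- pull back along the bijective map `e`
  have h3 : Ideal.map p m = ⊤ := by
    have := congrArg (Ideal.comap e) h2
    rwa [Ideal.comap_map_of_surjective e hbij.surjective, Ideal.comap_top,
      ← RingHom.ker_eq_comap_bot, (RingHom.injective_iff_ker_eq_bot e).mp hbij.injective,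
      sup_bot_eq] at this
  -- but `m` contains `π = ker p`, so `map p m` is proper
  have h4 := congrArg (Ideal.comap p) h3
  rw [Ideal.comap_map_of_surjective p Ideal.Quotient.mk_surjective, Ideal.comap_top,
    ← RingHom.ker_eq_comap_bot, Ideal.mk_ker,
    sup_eq_left.mpr (by rwa [Ideal.span_le, Set.singleton_subset_iff])] at h4
  exact hm.ne_top h4
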